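/- Every projector over the θ-deformed (2n+1)-plane algebra C_alg(ℝ^{2n+1}_Θ) (obtained by adjoining a central hermitian generator x to C_alg(ℝ^{2n}_Θ)) has all entries in ℂ·1. -/

import Mathlib

set_option linter.unusedSectionVars false

open Complex

namespace Stmt8Aux

variable {A : Type*} [Ring A] [StarRing A] [Algebra ℂ A] [StarModule ℂ A]

noncomputable def ee (r : ℝ) : ℂ := Complex.exp (r * Complex.I)

lemma ee_zero : ee 0 = 1 := by simp [ee]

lemma ee_mul (r s : ℝ) : ee r * ee s = ee (r + s) := by
  rw [ee, ee, ee, ← Complex.exp_add]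
  congr 1
  push_cast
  ring

lemma ee_ne_zero (r : ℝ) : ee r ≠ 0 := Complex.exp_ne_zero _

lemma star_ee (r : ℝ) : star (ee r) = ee (-r) := by
  rw [ee, ee, Complex.star_def, ← Complex.exp_conj]
  congr 1
  rw [map_mul, Complex.conj_I, Complex.conj_ofReal]
  push_cast
  ring

def TC (a b : A) (t : ℝ) : Prop := a * b = ee t • (b * a)

namespace TC

variable {a b c : A} {t s : ℝ}

lemma one_left (b : A) : TC (1 : A) b 0 := by simp [TC, ee_zero]

lemma one_right (a : A) : TC a (1 : A) 0 := by simp [TC, ee_zero]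

lemma symm (h : TC a b t) : TC b a (-t) := by
  rw [TC, h, smul_smul, ee_mul]
  simp [ee_zero]

lemma mul_left (h1 : TC a c t) (h2 : TC b c s) : TC (a * b) c (t + s) := by
  rw [TC, mul_assoc, h2, mul_smul_comm, ← mul_assoc, h1, smul_mul_assoc, smul_smul, ee_mul,
    mul_assoc, add_comm]

lemma mul_right (h1 : TC a b t) (h2 : TC a c s) : TC a (b * c) (t + s) := by
  rw [TC, ← mul_assoc, h1, smul_mul_assoc, mul_assoc, h2, mul_smul_comm, smul_smul, ee_mul,
    ← mul_assoc]

lemma pow_left (k : ℕ) (h : TC a b t) : TC (a ^ k) b (k * t) := by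
  induction k with
  | zero => simpa using one_left b
  | succ k ih =>
    have h2 := ih.mul_left h
    rw [← pow_succ] at h2
    have : ((k + 1 : ℕ) : ℝ) * t = (k : ℝ) * t + t := by push_cast; ring
    rwa [this]

lemma pow_right (k : ℕ) (h : TC a b t) : TC a (b ^ k) (k * t) := by
  have := (h.symm.pow_left k).symm
  have e : -((k : ℝ) * -t) = (k : ℝ) * t := by ring
  rwa [e] at this

lemma smul_left (μ : ℂ) (h : TC a b t) : TC (μ • a) b t := by
  rw [TC, smul_mul_assoc, h, mul_smul_comm, smul_comm]

end TC

lemma tc_list (w : A) : ∀ (L : List (A × ℝ)), (∀ x ∈ L, TC x.1 w x.2) →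
    TC ((L.map Prod.fst).prod) w ((L.map Prod.snd).sum) := by
  intro L
  induction L with
  | nil => intro _; simpa using TC.one_left w
  | cons a L ih =>
    intro h
    simp only [List.map_cons, List.prod_cons, List.sum_cons]
    exact (h a (by simp)).mul_left (ih fun x hx => h x (by simp [hx]))

lemma star_list_prod : ∀ (L : List A), star L.prod = (L.reverse.map star).prod := by
  intro L
  induction L with
  | nil => simp
  | cons a L ih => simp [star_mul, ih]

def Zm {n : ℕ} (z : Fin n → A) (p : Fin n → ℕ) : A := (List.ofFn fun i => z i ^ p i).prod

lemma Zm_zero {n : ℕ} (z : Fin n → A) : Zm z 0 = 1 := by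
  apply List.prod_eq_one
  intro a ha
  rw [List.mem_ofFn] at ha
  obtain ⟨i, rfl⟩ := ha
  simp

lemma Zm_tc {n : ℕ} (z : Fin n → A) (w : A) (τ : Fin n → ℝ) (h : ∀ i, TC (z i) w (τ i))
    (p : Fin n → ℕ) : TC (Zm z p) w (∑ i, (p i : ℝ) * τ i) := by
  have h2 := tc_list w (List.ofFn fun i => (z i ^ p i, (p i : ℝ) * τ i)) ?_
  · simpa [List.map_ofFn, Function.comp_def, List.sum_ofFn, Zm] using h2
  · intro a ha
    rw [List.mem_ofFn] at ha
    obtain ⟨i, rfl⟩ := ha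
    exact (h i).pow_left (p i)

lemma Zm_succ {n : ℕ} (z : Fin (n + 1) → A) (p : Fin (n + 1) → ℕ) :
    Zm z p = z 0 ^ p 0 * Zm (fun i => z i.succ) (fun i => p i.succ) := by
  simp [Zm, List.ofFn_succ]

lemma Zm_merge : ∀ {n : ℕ} (z : Fin n → A), (∀ i j, ∃ t : ℝ, TC (z i) (z j) t) →
    ∀ q p, ∃ α : ℝ, Zm z q * Zm z p = ee α • Zm z (q + p) := by
  intro n
  induction n with
  | zero =>
    intro z hp q p
    refine ⟨0, ?_⟩
    simp [Zm, ee_zero]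
  | succ n ih =>
    intro z hp q p
    obtain ⟨α, hα⟩ := ih (fun i => z i.succ) (fun i j => hp _ _) (fun i => q i.succ)
      (fun i => p i.succ)
    choose τ hτ using fun i : Fin n => hp i.succ 0
    have hsw : TC (Zm (fun i => z i.succ) (fun i => q i.succ)) (z 0 ^ p 0)
        (∑ i, ((q i.succ : ℝ)) * ((p 0 : ℝ) * τ i)) :=
      Zm_tc _ _ _ (fun i => (hτ i).pow_right (p 0)) _
    refine ⟨(∑ i, ((q i.succ : ℝ)) * ((p 0 : ℝ) * τ i)) + α, ?_⟩
    have e1 : Zm z (q + p) = z 0 ^ (q 0 + p 0) *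
        Zm (fun i => z i.succ) ((fun i => q i.succ) + fun i => p i.succ) := by
      rw [Zm_succ]
      rfl
    rw [Zm_succ z q, Zm_succ z p, e1]
    calc z 0 ^ q 0 * Zm (fun i => z i.succ) (fun i => q i.succ) *
          (z 0 ^ p 0 * Zm (fun i => z i.succ) (fun i => p i.succ))
        = z 0 ^ q 0 * ((Zm (fun i => z i.succ) (fun i => q i.succ) * z 0 ^ p 0) *
          Zm (fun i => z i.succ) (fun i => p i.succ)) := by simp only [mul_assoc]
      _ = z 0 ^ q 0 * ((ee (∑ i, ((q i.succ : ℝ)) * ((p 0 : ℝ) * τ i)) •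
            (z 0 ^ p 0 * Zm (fun i => z i.succ) (fun i => q i.succ))) *
          Zm (fun i => z i.succ) (fun i => p i.succ)) := by rw [hsw]
      _ = ee (∑ i, ((q i.succ : ℝ)) * ((p 0 : ℝ) * τ i)) •
            (z 0 ^ q 0 * z 0 ^ p 0 * (Zm (fun i => z i.succ) (fun i => q i.succ) *
              Zm (fun i => z i.succ) (fun i => p i.succ))) := by
          rw [smul_mul_assoc, mul_smul_comm]
          simp [mul_assoc]
      _ = ee (∑ i, ((q i.succ : ℝ)) * ((p 0 : ℝ) * τ i)) •
            (z 0 ^ (q 0 + p 0) * (ee α • Zm (fun i => z i.succ)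
              ((fun i => q i.succ) + fun i => p i.succ))) := by rw [pow_add, hα]
      _ = ee ((∑ i, ((q i.succ : ℝ)) * ((p 0 : ℝ) * τ i)) + α) •
            (z 0 ^ (q 0 + p 0) * Zm (fun i => z i.succ)
              ((fun i => q i.succ) + fun i => p i.succ)) := by
          rw [mul_smul_comm, smul_smul, ee_mul]

lemma Zm_rev : ∀ {n : ℕ} (z : Fin n → A), (∀ i j, ∃ t : ℝ, TC (z i) (z j) t) →
    ∀ p, ∃ α : ℝ, ((List.ofFn fun i => z i ^ p i).reverse).prod = ee α • Zm z p := by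
  intro n
  induction n with
  | zero =>
    intro z hp p
    refine ⟨0, ?_⟩
    simp [Zm, ee_zero]
  | succ n ih =>
    intro z hp p
    obtain ⟨α, hα⟩ := ih (fun i => z i.succ) (fun i j => hp _ _) (fun i => p i.succ)
    choose τ hτ using fun i : Fin n => hp i.succ 0
    have hsw : TC (Zm (fun i => z i.succ) (fun i => p i.succ)) (z 0 ^ p 0)
        (∑ i, ((p i.succ : ℝ)) * ((p 0 : ℝ) * τ i)) :=
      Zm_tc _ _ _ (fun i => (hτ i).pow_right (p 0)) _
    refine ⟨α + ∑ i, ((p i.succ : ℝ)) * ((p 0 : ℝ) * τ i), ?_⟩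
    rw [List.ofFn_succ, List.reverse_cons, List.prod_append, List.prod_singleton]
    have e2 : (List.ofFn fun i : Fin n => z i.succ ^ p i.succ).reverse.prod =
        ee α • Zm (fun i => z i.succ) (fun i => p i.succ) := hα
    rw [e2, smul_mul_assoc, hsw, smul_smul, ee_mul, Zm_succ]


section Ctx

variable {A : Type*} [Ring A] [StarRing A] [Algebra ℂ A] [StarModule ℂ A]
variable {n : ℕ} {θ : Fin n → Fin n → ℝ} {z zbar : Fin n → A} {x : A}

lemma star_Zm (hstarz : ∀ i, star (z i) = zbar i) (p : Fin n → ℕ) :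
    star (Zm z p) = ((List.ofFn fun i => zbar i ^ p i).reverse).prod := by
  rw [Zm, star_list_prod, List.map_reverse]
  congr 1
  have he : (star ∘ fun i => z i ^ p i) = fun i => zbar i ^ p i := by
    funext i
    simp [Function.comp, star_pow, hstarz]
  rw [List.map_ofFn, he]

lemma tc_starZ_pow (hstarz : ∀ i, star (z i) = zbar i)
    (tbz : ∀ i j, TC (zbar i) (z j) (θ j i)) (p : Fin n → ℕ) (j : Fin n) (b : ℕ) :
    TC (star (Zm z p)) (z j ^ b) (∑ i, (p i : ℝ) * ((b : ℝ) * θ j i)) := by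
  rw [star_Zm hstarz]
  have h2 := tc_list (z j ^ b)
    ((List.ofFn fun i => (zbar i ^ p i, (p i : ℝ) * ((b : ℝ) * θ j i))).reverse) ?_
  · simpa [List.map_reverse, List.map_ofFn, Function.comp_def, List.sum_reverse, List.sum_ofFn]
      using h2
  · intro a ha
    rw [List.mem_reverse, List.mem_ofFn] at ha
    obtain ⟨i, rfl⟩ := ha
    exact ((tbz i j).pow_right b).pow_left (p i)

lemma tc_starZ_Z (hstarz : ∀ i, star (z i) = zbar i)
    (tbz : ∀ i j, TC (zbar i) (z j) (θ j i)) (p p' : Fin n → ℕ) :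
    TC (star (Zm z p)) (Zm z p')
      (-∑ j, (p' j : ℝ) * (-∑ i, (p i : ℝ) * θ j i)) := by
  have h : ∀ j, TC (z j) (star (Zm z p)) (-∑ i, (p i : ℝ) * θ j i) := by
    intro j
    have h1 := (tc_starZ_pow hstarz tbz p j 1).symm
    rw [pow_one] at h1
    norm_num at h1
    exact h1
  exact (Zm_tc z _ _ h p').symm

lemma starZ_Z_self (hθ : ∀ i j, θ i j = - θ j i) (hstarz : ∀ i, star (z i) = zbar i)
    (tbz : ∀ i j, TC (zbar i) (z j) (θ j i)) (p : Fin n → ℕ) :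
    star (Zm z p) * Zm z p = Zm z p * star (Zm z p) := by
  have h := tc_starZ_Z hstarz tbz p p
  rw [TC] at h
  have hT : (-∑ j, (p j : ℝ) * (-∑ i, (p i : ℝ) * θ j i))
      = ∑ j, ∑ i, (p j : ℝ) * ((p i : ℝ) * θ j i) := by
    rw [← Finset.sum_neg_distrib]
    apply Finset.sum_congr rfl
    intro j _
    rw [mul_neg, neg_neg, Finset.mul_sum]
  have hzero : (∑ j, ∑ i, (p j : ℝ) * ((p i : ℝ) * θ j i)) = 0 := by
    have h1 : (∑ j, ∑ i, (p j : ℝ) * ((p i : ℝ) * θ j i))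
        = ∑ i, ∑ j, (p j : ℝ) * ((p i : ℝ) * θ j i) := Finset.sum_comm
    have h2 : (∑ i, ∑ j, (p j : ℝ) * ((p i : ℝ) * θ j i))
        = -∑ i, ∑ j, (p i : ℝ) * ((p j : ℝ) * θ i j) := by
      rw [← Finset.sum_neg_distrib]
      apply Finset.sum_congr rfl
      intro i _
      rw [← Finset.sum_neg_distrib]
      apply Finset.sum_congr rfl
      intro j _
      rw [hθ j i]
      ring
    have := h1.trans h2
    linarith
  rw [h, hT, hzero, ee_zero, one_smul]

lemma comm_x_Zm (txz : ∀ i, x * z i = z i * x) (p : Fin n → ℕ) : Commute x (Zm z p) := by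
  apply Commute.list_prod_right
  intro a ha
  rw [List.mem_ofFn] at ha
  obtain ⟨i, rfl⟩ := ha
  have hc : Commute x (z i) := txz i
  exact hc.pow_right (p i)

lemma comm_x_starZm (hxstar : star x = x) (txz : ∀ i, x * z i = z i * x) (p : Fin n → ℕ) :
    Commute x (star (Zm z p)) := by
  have h := comm_x_Zm txz p
  have h2 := congrArg star h.eq
  rw [star_mul, star_mul, hxstar] at h2
  exact h2.symm

end Ctx

section Ctx2

variable {A : Type*} [Ring A] [StarRing A] [Algebra ℂ A] [StarModule ℂ A]
variable {n : ℕ} {θ : Fin n → Fin n → ℝ} {z zbar : Fin n → A} {x : A}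

def sgm {n : ℕ} (u : (Fin n → ℕ) × (Fin n → ℕ) × ℕ) : (Fin n → ℕ) × (Fin n → ℕ) × ℕ :=
  (u.2.1, u.1, u.2.2)

noncomputable def Mm (z : Fin n → A) (x : A) (u : (Fin n → ℕ) × (Fin n → ℕ) × ℕ) : A :=
  Zm z u.1 * star (Zm z u.2.1) * x ^ u.2.2

lemma star_Mm (hxstar : star x = x) (u : (Fin n → ℕ) × (Fin n → ℕ) × ℕ) :
    star (Mm z x u) = x ^ u.2.2 * (Zm z u.2.1 * star (Zm z u.1)) := by
  rw [Mm, star_mul, star_mul, star_star, star_pow, hxstar]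

lemma main_diag (hθ : ∀ i j, θ i j = - θ j i)
    (tzz : ∀ i j, TC (z i) (z j) (θ i j))
    (hstarz : ∀ i, star (z i) = zbar i)
    (tbz : ∀ i j, TC (zbar i) (z j) (θ j i))
    (hxstar : star x = x) (txz : ∀ i, x * z i = z i * x)
    (u : (Fin n → ℕ) × (Fin n → ℕ) × ℕ) :
    star (Mm z x u) * Mm z x u = Mm z x (sgm u + u) := by
  obtain ⟨p, q, m⟩ := u
  obtain ⟨α, hα⟩ := Zm_merge z (fun i j => ⟨θ i j, tzz i j⟩) q p
  have h1 := starZ_Z_self hθ hstarz tbz p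
  have hx1 : Commute (x ^ m) (Zm z (q + p) * star (Zm z (q + p))) :=
    ((comm_x_Zm txz _).mul_right (comm_x_starZm hxstar txz _)).pow_left m
  have hR : Mm z x (sgm (p, q, m) + (p, q, m)) =
      Zm z (q + p) * star (Zm z (q + p)) * x ^ (m + m) := by
    show Zm z (q + p) * star (Zm z (p + q)) * x ^ (m + m) = _
    rw [add_comm p q]
  rw [star_Mm hxstar, hR]
  show x ^ m * (Zm z q * star (Zm z p)) * (Zm z p * star (Zm z q) * x ^ m) = _
  calc x ^ m * (Zm z q * star (Zm z p)) * (Zm z p * star (Zm z q) * x ^ m)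
      = x ^ m * (Zm z q * ((star (Zm z p) * Zm z p) * (star (Zm z q) * x ^ m))) := by
        simp only [mul_assoc]
    _ = x ^ m * (Zm z q * ((Zm z p * star (Zm z p)) * (star (Zm z q) * x ^ m))) := by rw [h1]
    _ = x ^ m * ((Zm z q * Zm z p) * star (Zm z q * Zm z p) * x ^ m) := by
        rw [star_mul]
        simp only [mul_assoc]
    _ = x ^ m * ((ee α • Zm z (q + p)) * star (ee α • Zm z (q + p)) * x ^ m) := by rw [hα]
    _ = x ^ m * (Zm z (q + p) * star (Zm z (q + p)) * x ^ m) := by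
        have hcancel : (ee α • Zm z (q + p)) * star (ee α • Zm z (q + p)) =
            Zm z (q + p) * star (Zm z (q + p)) := by
          rw [star_smul, star_ee, smul_mul_assoc, mul_smul_comm, smul_smul, ee_mul,
            add_neg_cancel, ee_zero, one_smul]
        rw [hcancel]
    _ = Zm z (q + p) * star (Zm z (q + p)) * x ^ (m + m) := by
        rw [← mul_assoc, hx1.eq, pow_add]
        simp only [mul_assoc]

lemma main_off (tzz : ∀ i j, TC (z i) (z j) (θ i j))
    (hstarz : ∀ i, star (z i) = zbar i)
    (tbz : ∀ i j, TC (zbar i) (z j) (θ j i))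
    (hxstar : star x = x) (txz : ∀ i, x * z i = z i * x)
    (u v : (Fin n → ℕ) × (Fin n → ℕ) × ℕ) :
    ∃ r : ℝ, star (Mm z x u) * Mm z x v = ee r • Mm z x (sgm u + v) := by
  obtain ⟨p, q, m⟩ := u
  obtain ⟨p', q', m'⟩ := v
  obtain ⟨α, hα⟩ := Zm_merge z (fun i j => ⟨θ i j, tzz i j⟩) q p'
  obtain ⟨β, hβ⟩ := Zm_merge z (fun i j => ⟨θ i j, tzz i j⟩) q' p
  have hT : star (Zm z p) * Zm z p' =
      ee (-∑ j, (p' j : ℝ) * (-∑ i, (p i : ℝ) * θ j i)) • (Zm z p' * star (Zm z p)) :=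
    tc_starZ_Z hstarz tbz p p'
  set T : ℝ := -∑ j, (p' j : ℝ) * (-∑ i, (p i : ℝ) * θ j i) with hTdef
  have hx1 : Commute (x ^ m) (Zm z (q + p') * star (Zm z (q' + p))) :=
    ((comm_x_Zm txz _).mul_right (comm_x_starZm hxstar txz _)).pow_left m
  have hR : Mm z x (sgm (p, q, m) + (p', q', m')) =
      Zm z (q + p') * star (Zm z (q' + p)) * x ^ (m + m') := by
    show Zm z (q + p') * star (Zm z (p + q')) * x ^ (m + m') = _
    rw [add_comm p q']
  refine ⟨T + (α + -β), ?_⟩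
  rw [star_Mm hxstar, hR]
  show x ^ m * (Zm z q * star (Zm z p)) * (Zm z p' * star (Zm z q') * x ^ m') = _
  calc x ^ m * (Zm z q * star (Zm z p)) * (Zm z p' * star (Zm z q') * x ^ m')
      = x ^ m * (Zm z q * ((star (Zm z p) * Zm z p') * (star (Zm z q') * x ^ m'))) := by
        simp only [mul_assoc]
    _ = x ^ m * (Zm z q * ((ee T • (Zm z p' * star (Zm z p))) * (star (Zm z q') * x ^ m'))) := by
        rw [hT]
    _ = ee T • (x ^ m * ((Zm z q * Zm z p') * ((star (Zm z p) * star (Zm z q')) * x ^ m'))) := by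
        simp only [mul_smul_comm, smul_mul_assoc, mul_assoc]
    _ = ee T • (x ^ m * ((ee α • Zm z (q + p')) * (star (Zm z q' * Zm z p) * x ^ m'))) := by
        rw [hα, ← star_mul]
    _ = ee T • (x ^ m * ((ee α • Zm z (q + p')) *
          ((ee (-β) • star (Zm z (q' + p))) * x ^ m'))) := by
        rw [hβ, star_smul, star_ee]
    _ = (ee T * (ee α * ee (-β))) •
          (x ^ m * (Zm z (q + p') * (star (Zm z (q' + p)) * x ^ m'))) := by
        simp only [mul_smul_comm, smul_mul_assoc, smul_smul, mul_assoc]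
        congr 1
        ring
    _ = ee (T + (α + -β)) • (Zm z (q + p') * star (Zm z (q' + p)) * (x ^ m * x ^ m')) := by
        rw [ee_mul, ee_mul]
        congr 1
        rw [show x ^ m * (Zm z (q + p') * (star (Zm z (q' + p)) * x ^ m')) =
          (x ^ m * (Zm z (q + p') * star (Zm z (q' + p)))) * x ^ m' by
            simp only [mul_assoc], hx1.eq]
        simp only [mul_assoc]
    _ = ee (T + (α + -β)) • (Zm z (q + p') * star (Zm z (q' + p)) * x ^ (m + m')) := by
        rw [pow_add]

end Ctx2

lemma phi_expand {A : Type*} [Ring A] [StarRing A] [Algebra ℂ A] [StarModule ℂ A]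
    {ι : Type} [DecidableEq ι] (S : Finset ι) (f : ι → ℂ) (g : ι → A)
    (φ : A → ℂ)
    (φsum : ∀ (s : Finset ι) (h : ι → A), φ (∑ i ∈ s, h i) = ∑ i ∈ s, φ (h i))
    (φsmul : ∀ (r : ℂ) (a : A), φ (r • a) = r * φ a)
    (cond : ι → Prop) [DecidablePred cond]
    (hφ : ∀ u ∈ S, ∀ v ∈ S, φ (star (g u) * g v) = if v = u ∧ cond u then 1 else 0) :
    φ (star (∑ u ∈ S, f u • g u) * ∑ v ∈ S, f v • g v) =
      ∑ u ∈ S, (if cond u then (Complex.normSq (f u) : ℂ) else 0) := by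
  rw [star_sum, Finset.sum_mul_sum, φsum]
  have step1 : ∀ u ∈ S, φ (∑ v ∈ S, star (f u • g u) * (f v • g v)) =
      ∑ v ∈ S, (if v = u ∧ cond u then (starRingEnd ℂ) (f u) * f v else 0) := by
    intro u hu
    rw [φsum]
    apply Finset.sum_congr rfl
    intro v hv
    rw [star_smul, smul_mul_smul_comm, φsmul, hφ u hu v hv]
    simp only [Complex.star_def]
    split_ifs
    · rw [mul_one]
    · rw [mul_zero]
  rw [Finset.sum_congr rfl step1]
  apply Finset.sum_congr rfl
  intro u hu
  by_cases hcu : cond u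
  · rw [if_pos hcu]
    have step2 : ∀ v ∈ S, (if v = u ∧ cond u then (starRingEnd ℂ) (f u) * f v else 0) =
        (if v = u then (starRingEnd ℂ) (f u) * f v else 0) := by
      intro v _
      by_cases h : v = u
      · simp [h, hcu]
      · simp [h]
    rw [Finset.sum_congr rfl step2, Finset.sum_ite_eq' S u
      (fun v => (starRingEnd ℂ) (f u) * f v), if_pos hu, ← Complex.normSq_eq_conj_mul_self]
  · rw [if_neg hcu]
    apply Finset.sum_eq_zero
    intro v _
    rw [if_neg]
    rintro ⟨-, hc⟩
    exact hcu hc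

end Stmt8Aux

open Stmt8Aux

set_option maxHeartbeats 1000000 in
theorem stmt_8 {A : Type*} [Ring A] [StarRing A] [Algebra ℂ A] [StarModule ℂ A] {n : ℕ}
    (θ : Fin n → Fin n → ℝ) (hθ : ∀ p q, θ p q = - θ q p)
    (z zbar : Fin n → A) (x : A)
    (hzz : ∀ p q, z p * z q = Complex.exp (θ p q * Complex.I) • (z q * z p))
    (hbb : ∀ p q, zbar p * zbar q = Complex.exp (θ p q * Complex.I) • (zbar q * zbar p))
    (hbz : ∀ p q, zbar p * z q = Complex.exp (θ q p * Complex.I) • (z q * zbar p))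
    (hstarz : ∀ p, star (z p) = zbar p)
    (hxstar : star x = x)
    (hxz : ∀ p, x * z p = z p * x)
    (B : Module.Basis ((Fin n → ℕ) × (Fin n → ℕ) × ℕ) ℂ A)
    (hB : ∀ (p q : Fin n → ℕ) (m : ℕ), B (p, q, m) =
      (List.ofFn fun i => z i ^ p i).prod * (List.ofFn fun i => zbar i ^ q i).prod * x ^ m) :
    ∀ (N : ℕ) (P : Matrix (Fin N) (Fin N) A),
      P * P = P → P.conjTranspose = P →
      ∀ k l, ∃ c : ℂ, P k l = algebraMap ℂ A c := by
  classical
  intro N P hP hH k l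
  have tzz : ∀ i j, TC (z i) (z j) (θ i j) := hzz
  have tbb : ∀ i j, TC (zbar i) (zbar j) (θ i j) := hbb
  have tbz : ∀ i j, TC (zbar i) (z j) (θ j i) := hbz
  -- Mm in terms of B
  have hMB : ∀ u, ∃ r : ℝ, Mm z x u = ee r • B u := by
    rintro ⟨p, q, m⟩
    obtain ⟨γ, hγ⟩ := Zm_rev zbar (fun i j => ⟨θ i j, tbb i j⟩) q
    refine ⟨γ, ?_⟩
    rw [hB p q m]
    show Zm z p * star (Zm z q) * x ^ m = ee γ • (Zm z p * Zm zbar q * x ^ m)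
    rw [star_Zm hstarz, hγ, mul_smul_comm, smul_mul_assoc]
  have hwu : ∀ u, IsUnit (ee (Classical.choose (hMB u))) :=
    fun u => isUnit_iff_ne_zero.2 (ee_ne_zero _)
  set Cb := B.isUnitSMul hwu with hCbdef
  have hCb : ∀ u, Cb u = Mm z x u := by
    intro u
    rw [hCbdef, Module.Basis.isUnitSMul_apply]
    exact (Classical.choose_spec (hMB u)).symm
  have hC0 : Cb (0, 0, 0) = 1 := by
    rw [hCb]
    show Zm z 0 * star (Zm z 0) * x ^ 0 = 1
    rw [Zm_zero, star_one, pow_zero, mul_one, mul_one]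
  have hdiag : ∀ u, star (Cb u) * Cb u = Cb (sgm u + u) := by
    intro u
    rw [hCb, hCb]
    exact main_diag hθ tzz hstarz tbz hxstar hxz u
  have hoff : ∀ u v, ∃ r : ℝ, star (Cb u) * Cb v = ee r • Cb (sgm u + v) := by
    intro u v
    rw [hCb, hCb, hCb]
    exact main_off tzz hstarz tbz hxstar hxz u v
  -- coordinates
  set c : Fin N → Fin N → (((Fin n → ℕ) × (Fin n → ℕ) × ℕ) →₀ ℂ) :=
    fun k l => Cb.repr (P k l) with hc
  set K : Finset ((Fin n → ℕ) × (Fin n → ℕ) × ℕ) :=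
    Finset.univ.biUnion (fun kl : Fin N × Fin N => (c kl.1 kl.2).support) with hK
  have hKmem : ∀ k l u, u ∈ (c k l).support → u ∈ K := by
    intro k l u hu
    exact Finset.mem_biUnion.2 ⟨(k, l), Finset.mem_univ _, hu⟩
  -- expansion
  have hexp : ∀ (a : A), a = ∑ u ∈ (Cb.repr a).support, (Cb.repr a) u • Cb u := by
    intro a
    conv_lhs => rw [← Cb.linearCombination_repr a]
    rw [Finsupp.linearCombination_apply, Finsupp.sum]
  -- KEY: all indices in K are zero
  have key : ∀ u ∈ K, u = ((0, 0, 0) : (Fin n → ℕ) × (Fin n → ℕ) × ℕ) := by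
    by_contra hcon
    push_neg at hcon
    obtain ⟨ub, hubK, hubne⟩ := hcon
    set Ψ : ((Fin n → ℕ) × (Fin n → ℕ) × ℕ) → ℕ :=
      fun u => ∑ i, (u.1 i + u.2.1 i) ^ 2 with hΨdef
    have hKne : K.Nonempty := ⟨ub, hubK⟩
    obtain ⟨u1, hu1K, hu1max⟩ := K.exists_max_image Ψ hKne
    have hK2ne : (K.filter (fun u => Ψ u = Ψ u1)).Nonempty :=
      ⟨u1, Finset.mem_filter.2 ⟨hu1K, rfl⟩⟩
    obtain ⟨us, husK2, husmax⟩ :=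
      (K.filter (fun u => Ψ u = Ψ u1)).exists_max_image (fun u => u.2.2) hK2ne
    have husK : us ∈ K := (Finset.mem_filter.1 husK2).1
    have hΨus : Ψ us = Ψ u1 := (Finset.mem_filter.1 husK2).2
    have P1 : ∀ v ∈ K, Ψ v ≤ Ψ us := fun v hv => (hu1max v hv).trans hΨus.ge
    have P2 : ∀ v ∈ K, v.1 + v.2.1 = us.1 + us.2.1 → v.2.2 ≤ us.2.2 := by
      intro v hv hs
      apply husmax
      refine Finset.mem_filter.2 ⟨hv, ?_⟩
      rw [← hΨus]
      apply Finset.sum_congr rfl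
      intro i _
      have h2 := congrFun hs i
      simp only [Pi.add_apply] at h2
      rw [h2]
    set s0 : Fin n → ℕ := us.1 + us.2.1 with hs0def
    set m0 : ℕ := us.2.2 with hm0def
    have hΨs0 : Ψ us = ∑ i, (s0 i) ^ 2 := rfl
    -- P3 : not both zero
    have P3 : ¬(s0 = 0 ∧ m0 = 0) := by
      rintro ⟨hs0z, hm0z⟩
      by_cases hbs : ub.1 + ub.2.1 = 0
      · have hbm : ub.2.2 ≤ m0 := P2 ub hubK (by rw [hbs, hs0z])
        have hb1 : ub.1 = 0 := by
          funext i
          have := congrFun hbs i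
          simp only [Pi.add_apply, Pi.zero_apply] at this ⊢
          omega
        have hb2 : ub.2.1 = 0 := by
          funext i
          have := congrFun hbs i
          simp only [Pi.add_apply, Pi.zero_apply] at this ⊢
          omega
        have hb3 : ub.2.2 = 0 := by omega
        refine hubne (Prod.ext_iff.2 ⟨hb1, Prod.ext_iff.2 ⟨hb2, hb3⟩⟩)
      · have hex : ∃ i, 0 < ub.1 i + ub.2.1 i := by
          by_contra hno
          push_neg at hno
          apply hbs
          funext i
          have := hno i
          simp only [Pi.add_apply, Pi.zero_apply]
          omega
        obtain ⟨i, hi⟩ := hex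
        have hψb : 0 < Ψ ub := by
          calc 0 < (ub.1 i + ub.2.1 i) ^ 2 := by positivity
            _ ≤ Ψ ub := Finset.single_le_sum
                (f := fun i => (ub.1 i + ub.2.1 i) ^ 2) (fun _ _ => Nat.zero_le _)
                (Finset.mem_univ i)
        have hψs : 0 < Ψ us := lt_of_lt_of_le hψb (P1 ub hubK)
        have : Ψ us = 0 := by
          rw [hΨs0]
          apply Finset.sum_eq_zero
          intro i _
          rw [hs0z]
          simp
        omega
    set w0 : (Fin n → ℕ) × (Fin n → ℕ) × ℕ := (s0, s0, 2 * m0) with hw0def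
    have hadd : ∀ u : (Fin n → ℕ) × (Fin n → ℕ) × ℕ, u.1 + u.2.1 = s0 → u.2.2 = m0 →
        sgm u + u = w0 := by
      intro u h1 h2
      show (u.2.1 + u.1, u.1 + u.2.1, u.2.2 + u.2.2) = (s0, s0, 2 * m0)
      simp only [Prod.mk.injEq]
      exact ⟨by rw [add_comm]; exact h1, h1, by omega⟩
    have hw0us : sgm us + us = w0 := hadd us rfl rfl
    -- w0 not in K
    have hw0K : w0 ∉ K := by
      intro hin
      have h4 : Ψ w0 = 4 * Ψ us := by
        rw [hΨs0, hΨdef, Finset.mul_sum]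
        apply Finset.sum_congr rfl
        intro i _
        show (s0 i + s0 i) ^ 2 = 4 * (s0 i) ^ 2
        ring
      have hle := P1 w0 hin
      have hΨ0 : Ψ us = 0 := by omega
      have hs00 : s0 = 0 := by
        funext i
        have h5 : (s0 i) ^ 2 = 0 := by
          have := (Finset.sum_eq_zero_iff).1 (hΨs0 ▸ hΨ0) i (Finset.mem_univ i)
          exact this
        simpa using h5
      have hmle : 2 * m0 ≤ m0 := P2 w0 hin (by show s0 + s0 = s0; rw [hs00]; simp)
      have hm00 : m0 = 0 := by omega
      exact P3 ⟨hs00, hm00⟩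
    -- forcing pairs
    have pair : ∀ u ∈ K, ∀ v ∈ K, sgm u + v = w0 →
        u = v ∧ u.1 + u.2.1 = s0 ∧ u.2.2 = m0 := by
      intro u huK v hvK heq
      have e1 : u.2.1 + v.1 = s0 := congrArg Prod.fst heq
      have e2 : u.1 + v.2.1 = s0 := congrArg (fun w => w.2.1) heq
      have e3 : u.2.2 + v.2.2 = 2 * m0 := congrArg (fun w => w.2.2) heq
      have esum : ∀ i, (u.1 i + u.2.1 i) + (v.1 i + v.2.1 i) = 2 * s0 i := by
        intro i
        have h1 := congrFun e1 i
        have h2 := congrFun e2 i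
        simp only [Pi.add_apply] at h1 h2
        omega
      have hconv : ∀ i ∈ Finset.univ (α := Fin n), 2 * (s0 i) ^ 2 ≤
          (u.1 i + u.2.1 i) ^ 2 + (v.1 i + v.2.1 i) ^ 2 := by
        intro i _
        have hab := esum i
        have hz : (2 : ℤ) * (s0 i) ^ 2 ≤ ((u.1 i + u.2.1 i : ℕ) : ℤ) ^ 2 +
            ((v.1 i + v.2.1 i : ℕ) : ℤ) ^ 2 := by
          have hab' : ((u.1 i + u.2.1 i : ℕ) : ℤ) + ((v.1 i + v.2.1 i : ℕ) : ℤ)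
              = 2 * (s0 i : ℤ) := by exact_mod_cast hab
          nlinarith [sq_nonneg (((u.1 i + u.2.1 i : ℕ) : ℤ) - ((v.1 i + v.2.1 i : ℕ) : ℤ))]
        exact_mod_cast hz
      have htot : (∑ i, ((u.1 i + u.2.1 i) ^ 2 + (v.1 i + v.2.1 i) ^ 2)) = ∑ i, 2 * (s0 i) ^ 2 := by
        have h1 : (∑ i, ((u.1 i + u.2.1 i) ^ 2 + (v.1 i + v.2.1 i) ^ 2)) = Ψ u + Ψ v :=
          Finset.sum_add_distrib
        have h2 : (∑ i, 2 * (s0 i) ^ 2) = 2 * Ψ us := by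
          rw [hΨs0, Finset.mul_sum]
        have h3 := P1 u huK
        have h4 := P1 v hvK
        have h5 := Finset.sum_le_sum hconv
        rw [h2] at h5 ⊢
        rw [h1] at h5 ⊢
        omega
      have hEq := (Finset.sum_eq_sum_iff_of_le hconv).1 htot.symm
      have hsv : ∀ i, u.1 i + u.2.1 i = s0 i ∧ v.1 i + v.2.1 i = s0 i := by
        intro i
        have h1 := esum i
        have h2 := (hEq i (Finset.mem_univ i)).symm
        have hz : ((u.1 i + u.2.1 i : ℕ) : ℤ) = ((v.1 i + v.2.1 i : ℕ) : ℤ) := by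
          have h1' : ((u.1 i + u.2.1 i : ℕ) : ℤ) + ((v.1 i + v.2.1 i : ℕ) : ℤ)
              = 2 * (s0 i : ℤ) := by exact_mod_cast h1
          have h2' : ((u.1 i + u.2.1 i : ℕ) : ℤ) ^ 2 + ((v.1 i + v.2.1 i : ℕ) : ℤ) ^ 2
              = 2 * (s0 i : ℤ) ^ 2 := by exact_mod_cast h2
          nlinarith [sq_nonneg (((u.1 i + u.2.1 i : ℕ) : ℤ) - ((v.1 i + v.2.1 i : ℕ) : ℤ))]
        have hz' : u.1 i + u.2.1 i = v.1 i + v.2.1 i := by exact_mod_cast hz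
        omega
      have hsu : u.1 + u.2.1 = s0 := funext fun i => (hsv i).1
      have hsvv : v.1 + v.2.1 = s0 := funext fun i => (hsv i).2
      have hmu : u.2.2 ≤ m0 := P2 u huK (by rw [hsu])
      have hmv : v.2.2 ≤ m0 := P2 v hvK (by rw [hsvv])
      have hmum : u.2.2 = m0 := by omega
      have hmvm : v.2.2 = m0 := by omega
      have hq : u.2.1 = v.2.1 := by
        funext i
        have h1 := congrFun e1 i
        have h2 := (hsv i).2
        have h3 := congrFun hsvv i
        simp only [Pi.add_apply] at h1 h3
        omega
      have hp : u.1 = v.1 := by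
        funext i
        have h1 := congrFun e2 i
        have h3 := congrFun hsvv i
        simp only [Pi.add_apply] at h1 h3
        omega
      exact ⟨Prod.ext_iff.2 ⟨hp, Prod.ext_iff.2 ⟨hq, by omega⟩⟩, hsu, hmum⟩
    -- the column where us lives
    obtain ⟨⟨k0, l0⟩, -, hus_supp⟩ := Finset.mem_biUnion.1 husK
    -- projector diagonal identity
    have hsym : ∀ m, P l0 m = star (P m l0) := by
      intro m
      rw [← Matrix.conjTranspose_apply, hH]
    have hPeq : P l0 l0 = ∑ m : Fin N, star (P m l0) * P m l0 := by
      have h1 : P l0 l0 = ∑ m, P l0 m * P m l0 := by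
        conv_lhs => rw [← hP, Matrix.mul_apply]
      rw [h1]
      exact Finset.sum_congr rfl fun m _ => by rw [hsym m]
    -- linear functional
    set φ : A → ℂ := fun a => Cb.repr a w0 with hφdef
    have φsum : ∀ {ι : Type} (s : Finset ι) (g : ι → A),
        φ (∑ i ∈ s, g i) = ∑ i ∈ s, φ (g i) := by
      intro ι s g
      show Cb.repr (∑ i ∈ s, g i) w0 = _
      rw [map_sum, Finsupp.finset_sum_apply]
    have φsmul : ∀ (r : ℂ) (a : A), φ (r • a) = r * φ a := by
      intro r a
      show Cb.repr (r • a) w0 = _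
      rw [map_smul, Finsupp.smul_apply, smul_eq_mul]
    have φCb : ∀ u, φ (Cb u) = if u = w0 then 1 else 0 := by
      intro u
      show Cb.repr (Cb u) w0 = _
      rw [Module.Basis.repr_self, Finsupp.single_apply]
    -- evaluation of φ on products
    have hφprod : ∀ u ∈ K, ∀ v ∈ K, φ (star (Cb u) * Cb v) =
        if v = u ∧ (u.1 + u.2.1 = s0 ∧ u.2.2 = m0) then 1 else 0 := by
      intro u huK v hvK
      by_cases hne : sgm u + v = w0
      · obtain ⟨huv, hcond⟩ := pair u huK v hvK hne
        rw [← huv, hdiag u, φCb, if_pos (hadd u hcond.1 hcond.2), if_pos ⟨rfl, hcond⟩]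
      · obtain ⟨r, hr⟩ := hoff u v
        rw [hr, φsmul, φCb, if_neg hne, mul_zero]
        rw [if_neg]
        rintro ⟨hvu, hcond⟩
        exact hne (by rw [hvu]; exact hadd u hcond.1 hcond.2)
    -- expand the diagonal entry
    have hzero : φ (P l0 l0) = 0 := by
      show Cb.repr (P l0 l0) w0 = 0
      have hns : w0 ∉ (c l0 l0).support := fun hin => hw0K (hKmem l0 l0 w0 hin)
      exact Finsupp.notMem_support_iff.1 hns
    have hexp2 : φ (P l0 l0) = ∑ m : Fin N, ∑ u ∈ (c m l0).support,
        (if u.1 + u.2.1 = s0 ∧ u.2.2 = m0 then (Complex.normSq ((c m l0) u) : ℂ) else 0) := by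
      rw [hPeq, φsum]
      apply Finset.sum_congr rfl
      intro m _
      have ha : P m l0 = ∑ u ∈ (c m l0).support, (c m l0) u • Cb u := hexp (P m l0)
      rw [ha]
      exact phi_expand (c m l0).support (c m l0) Cb φ (fun s g => φsum s g) φsmul
        (fun u => u.1 + u.2.1 = s0 ∧ u.2.2 = m0)
        (fun u hu v hv => hφprod u (hKmem m l0 u hu) v (hKmem m l0 v hv))
    -- extract nonnegativity
    have hreal : (0 : ℝ) = ∑ m : Fin N, ∑ u ∈ (c m l0).support,
        (if u.1 + u.2.1 = s0 ∧ u.2.2 = m0 then Complex.normSq ((c m l0) u) else 0) := by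
      have h2 : ((0 : ℂ)) = ((∑ m : Fin N, ∑ u ∈ (c m l0).support,
          (if u.1 + u.2.1 = s0 ∧ u.2.2 = m0 then Complex.normSq ((c m l0) u) else 0) : ℝ) : ℂ) := by
        rw [← hzero, hexp2]
        push_cast
        apply Finset.sum_congr rfl
        intro m _
        apply Finset.sum_congr rfl
        intro u _
        split_ifs <;> simp
      exact_mod_cast h2
    have hallzero : ∀ m : Fin N, ∀ u ∈ (c m l0).support,
        (if u.1 + u.2.1 = s0 ∧ u.2.2 = m0 then Complex.normSq ((c m l0) u) else 0) = 0 := by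
      have h1 := hreal.symm
      have h2 : ∀ m ∈ (Finset.univ : Finset (Fin N)), (0:ℝ) ≤ ∑ u ∈ (c m l0).support,
          (if u.1 + u.2.1 = s0 ∧ u.2.2 = m0 then Complex.normSq ((c m l0) u) else 0) := by
        intro m _
        apply Finset.sum_nonneg
        intro u _
        split_ifs
        · exact Complex.normSq_nonneg _
        · exact le_rfl
      intro m u hu
      have h3 := (Finset.sum_eq_zero_iff_of_nonneg h2).1 h1 m (Finset.mem_univ m)
      have h4 : ∀ u ∈ (c m l0).support, (0:ℝ) ≤
          (if u.1 + u.2.1 = s0 ∧ u.2.2 = m0 then Complex.normSq ((c m l0) u) else 0) := by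
        intro u _
        split_ifs
        · exact Complex.normSq_nonneg _
        · exact le_rfl
      exact (Finset.sum_eq_zero_iff_of_nonneg h4).1 h3 u hu
    -- contradiction at us
    have hus0 := hallzero k0 us hus_supp
    rw [if_pos ⟨rfl, rfl⟩] at hus0
    have : (c k0 l0) us = 0 := by
      exact Complex.normSq_eq_zero.1 hus0
    exact (Finsupp.mem_support_iff.1 hus_supp) this
  -- conclude: entries are scalars
  refine ⟨(c k l) (0, 0, 0), ?_⟩
  have hsupp : (c k l).support ⊆ {((0, 0, 0) : (Fin n → ℕ) × (Fin n → ℕ) × ℕ)} :=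
    fun u hu => Finset.mem_singleton.2 (key u (hKmem k l u hu))
  have hsum : P k l = ∑ u ∈ (c k l).support, (c k l) u • Cb u := hexp (P k l)
  rw [hsum, Finset.sum_subset hsupp ?_]
  · rw [Finset.sum_singleton, hC0, Algebra.algebraMap_eq_smul_one]
  · intro u _ hnots
    rw [Finsupp.notMem_support_iff.1 hnots, zero_smul]
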